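/- arXiv:1810.00412 — 4 statements merged into one kernel-verified Lean document; each statement's English description precedes it below -/
import Mathlib

section
/- For a fixed p×p real matrix A with A^T A ≠ 0, the function f(X) = 1/tr(X^{-1} A^T A) is concave on the cone of p×p symmetric positive definite matrices. -/
open Matrix

lemma trace_tmul_sum {d p : ℕ} (U V : Matrix (Fin d) (Fin p) ℝ) :
    (Uᵀ * V).trace = ∑ x : Fin p × Fin d, U x.2 x.1 * V x.2 x.1 := by
  rw [Matrix.trace, Fintype.sum_prod_type]
  simp [Matrix.diag, Matrix.mul_apply, Matrix.transpose_apply]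

lemma trace_cs {d p : ℕ} (U V : Matrix (Fin d) (Fin p) ℝ) :
    (Uᵀ * V).trace ^ 2 ≤ (Uᵀ * U).trace * (Vᵀ * V).trace := by
  rw [trace_tmul_sum, trace_tmul_sum, trace_tmul_sum]
  have h := Finset.sum_mul_sq_le_sq_mul_sq Finset.univ
    (fun x : Fin p × Fin d => U x.2 x.1) (fun x : Fin p × Fin d => V x.2 x.1)
  simpa [pow_two] using h

lemma trace_tmul_pos {d p : ℕ} (U : Matrix (Fin d) (Fin p) ℝ) (hU : U ≠ 0) :
    0 < (Uᵀ * U).trace := by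
  rw [trace_tmul_sum]
  have : ∃ i j, U i j ≠ 0 := by
    by_contra h
    push_neg at h
    exact hU (by ext i j; simpa using h i j)
  obtain ⟨i, j, hij⟩ := this
  refine Finset.sum_pos' (fun x _ => mul_self_nonneg _) ⟨(j, i), Finset.mem_univ _, ?_⟩
  exact mul_self_pos.mpr hij

open scoped MatrixOrder in
lemma aux_cs {p d : ℕ} (A : Matrix (Fin d) (Fin p) ℝ) (hA : A ≠ 0)
    (W C : Matrix (Fin p) (Fin p) ℝ) (hW : W.PosDef) (hC : Cᵀ = C) :
    0 < (W⁻¹ * (Aᵀ * A)).trace ∧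
      (C * (Aᵀ * A)).trace ^ 2 ≤
        (W⁻¹ * (Aᵀ * A)).trace * (C * W * C * (Aᵀ * A)).trace := by
  set R := CFC.sqrt W with hRdef
  have hRR : R * R = W := CFC.sqrt_mul_sqrt_self W hW.posSemidef.nonneg
  have hRsym : Rᵀ = R := by
    rw [← Matrix.conjTranspose_eq_transpose_of_trivial]
    exact (CFC.sqrt_nonneg W).posSemidef.1
  have hdetR : IsUnit R.det := by
    rw [isUnit_iff_ne_zero]
    intro h
    have : W.det = 0 := by rw [← hRR, Matrix.det_mul, h, mul_zero]
    exact hW.det_pos.ne' this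
  have hRi : R * R⁻¹ = 1 := Matrix.mul_nonsing_inv R hdetR
  have hiR : R⁻¹ * R = 1 := Matrix.nonsing_inv_mul R hdetR
  have hRiT : (R⁻¹)ᵀ = R⁻¹ := by rw [Matrix.transpose_nonsing_inv, hRsym]
  have hWinv : W⁻¹ = R⁻¹ * R⁻¹ := by rw [← hRR, Matrix.mul_inv_rev]
  set U := A * R⁻¹ with hU
  set V := A * (C * R) with hV
  have hUne : U ≠ 0 := by
    intro h
    apply hA
    have : U * R = A := by
      rw [hU, Matrix.mul_assoc, hiR, Matrix.mul_one]
    rw [← this, h, Matrix.zero_mul]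
  have trUU : (Uᵀ * U).trace = (W⁻¹ * (Aᵀ * A)).trace := by
    rw [hU, Matrix.transpose_mul, hRiT]
    rw [show R⁻¹ * Aᵀ * (A * R⁻¹) = R⁻¹ * (Aᵀ * A) * R⁻¹ by
      simp only [Matrix.mul_assoc]]
    rw [Matrix.trace_mul_cycle, ← Matrix.mul_assoc, ← hWinv, Matrix.mul_assoc]
  have trUV : (Uᵀ * V).trace = (C * (Aᵀ * A)).trace := by
    rw [hU, hV, Matrix.transpose_mul, hRiT]
    rw [show R⁻¹ * Aᵀ * (A * (C * R)) = R⁻¹ * ((Aᵀ * A) * (C * R)) by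
      simp only [Matrix.mul_assoc]]
    rw [Matrix.trace_mul_comm]
    rw [show Aᵀ * A * (C * R) * R⁻¹ = Aᵀ * A * C * (R * R⁻¹) by
      simp only [Matrix.mul_assoc]]
    rw [hRi, Matrix.mul_one, Matrix.trace_mul_comm]
  have trVV : (Vᵀ * V).trace = (C * W * C * (Aᵀ * A)).trace := by
    rw [hV, Matrix.transpose_mul, Matrix.transpose_mul, hRsym, hC]
    rw [show R * C * Aᵀ * (A * (C * R)) = R * (C * (Aᵀ * A) * (C * R)) by
      simp only [Matrix.mul_assoc]]
    rw [Matrix.trace_mul_comm]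
    rw [show C * (Aᵀ * A) * (C * R) * R = (C * (Aᵀ * A)) * (C * (R * R)) by
      simp only [Matrix.mul_assoc]]
    rw [hRR, Matrix.trace_mul_comm]
    simp only [Matrix.mul_assoc]
  refine ⟨trUU ▸ trace_tmul_pos U hUne, ?_⟩
  rw [← trUU, ← trUV, ← trVV]
  exact trace_cs U V

lemma posSemidef_smul_real {p : ℕ} {M : Matrix (Fin p) (Fin p) ℝ} (hM : M.PosSemidef)
    {c : ℝ} (hc : 0 ≤ c) : (c • M).PosSemidef := by
  refine ⟨?_, fun x => ?_⟩
  · unfold Matrix.IsHermitian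
    rw [Matrix.conjTranspose_smul, hM.1]
    simp
  · exact (hM.smul hc).2 x

lemma posDef_smul_real {p : ℕ} {M : Matrix (Fin p) (Fin p) ℝ} (hM : M.PosDef)
    {c : ℝ} (hc : 0 < c) : (c • M).PosDef := by
  refine ⟨?_, fun x hx => ?_⟩
  · unfold Matrix.IsHermitian
    rw [Matrix.conjTranspose_smul, hM.1]
    simp
  · exact (hM.smul hc).2 hx

/-- `X ↦ 1/tr(X⁻¹ Aᵀ A)` is concave on positive definite matrices. -/
theorem concave_inv_trace_inv (p d : ℕ) (A : Matrix (Fin d) (Fin p) ℝ)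
    (hA : Aᵀ * A ≠ 0) :
    ∀ (X Y : Matrix (Fin p) (Fin p) ℝ), X.PosDef → Y.PosDef →
      ∀ t : ℝ, 0 ≤ t → t ≤ 1 →
        t * ((X⁻¹ * (Aᵀ * A)).trace)⁻¹ + (1 - t) * ((Y⁻¹ * (Aᵀ * A)).trace)⁻¹
          ≤ (((t • X + (1 - t) • Y)⁻¹ * (Aᵀ * A)).trace)⁻¹ := by
  intro X Y hX hY t ht0 ht1
  have hAne : A ≠ 0 := fun h => hA (by rw [h]; simp)
  set Z := t • X + (1 - t) • Y with hZdef
  have hZ : Z.PosDef := by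
    rcases eq_or_lt_of_le ht1 with h1 | h1
    · have : Z = X := by rw [hZdef, h1]; simp
      rw [this]; exact hX
    · exact Matrix.PosDef.posSemidef_add
        (posSemidef_smul_real hX.posSemidef ht0)
        (posDef_smul_real hY (by linarith))
  have hC : (Z⁻¹)ᵀ = Z⁻¹ := by
    rw [← Matrix.conjTranspose_eq_transpose_of_trivial]
    exact hZ.inv.1
  set C := Z⁻¹ with hCdef
  obtain ⟨hsX, hcsX⟩ := aux_cs A hAne X C hX hC
  obtain ⟨hsY, hcsY⟩ := aux_cs A hAne Y C hY hC
  obtain ⟨hsZ, _⟩ := aux_cs A hAne Z C hZ hC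
  set B := Aᵀ * A with hB
  have hCZ : C * Z = 1 := Matrix.nonsing_inv_mul Z (Matrix.isUnit_iff_isUnit_det Z |>.mp hZ.isUnit)
  -- s = tr(C*B) = tr(Z⁻¹ * B) > 0
  set s := (C * B).trace with hs
  have hs_pos : 0 < s := hsZ
  -- convex combination of quadratic traces equals s
  have hq : t * (C * X * C * B).trace + (1 - t) * (C * Y * C * B).trace = s := by
    have expand : C * Z * C * B = t • (C * X * C * B) + (1 - t) • (C * Y * C * B) := by
      rw [hZdef]
      rw [Matrix.mul_add, Matrix.add_mul, Matrix.add_mul]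
      congr 1 <;> simp [Matrix.mul_smul, Matrix.smul_mul]
    have : (C * Z * C * B).trace = s := by rw [hCZ, Matrix.one_mul]
    rw [← this, expand, Matrix.trace_add, Matrix.trace_smul, Matrix.trace_smul,
      smul_eq_mul, smul_eq_mul]
  -- bound each term
  have hboundX : ((X⁻¹ * B).trace)⁻¹ ≤ (C * X * C * B).trace / s ^ 2 := by
    rw [inv_eq_one_div, div_le_div_iff₀ hsX (by positivity)]
    linarith [hcsX]
  have hboundY : ((Y⁻¹ * B).trace)⁻¹ ≤ (C * Y * C * B).trace / s ^ 2 := by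
    rw [inv_eq_one_div, div_le_div_iff₀ hsY (by positivity)]
    linarith [hcsY]
  have final : t * ((X⁻¹ * B).trace)⁻¹ + (1 - t) * ((Y⁻¹ * B).trace)⁻¹ ≤ s⁻¹ := by
    calc t * ((X⁻¹ * B).trace)⁻¹ + (1 - t) * ((Y⁻¹ * B).trace)⁻¹
        ≤ t * ((C * X * C * B).trace / s ^ 2) + (1 - t) * ((C * Y * C * B).trace / s ^ 2) := by
          gcongr <;> linarith
      _ = (t * (C * X * C * B).trace + (1 - t) * (C * Y * C * B).trace) / s ^ 2 := by ring
      _ = s / s ^ 2 := by rw [hq]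
      _ = s⁻¹ := by field_simp
  exact final
end

section
/- Let X be symmetric positive definite and V symmetric such that X + tV is positive definite for t in an interval I containing 0. Write the eigendecomposition X^{-1/2} V X^{-1/2} = Q Λ Q^T with eigenvalues λ_i, and set α_i = (Q^T X^{-1} Q)_{ii} > 0. Then g(t) = 1/tr[(X+tV)^{-1}] satisfies g(t) = (sum_i α_i/(1 + t λ_i))^{-1}, and g''(t) ≤ 0 on I. -/
open Matrix

lemma posDef_transpose_mul_mul {p : ℕ} {A : Matrix (Fin p) (Fin p) ℝ} (hA : A.PosDef)
    (B : Matrix (Fin p) (Fin p) ℝ) (hB : IsUnit B) : (Bᵀ * A * B).PosDef := by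
  have hAt : Aᵀ = A := by
    have := hA.1
    rwa [Matrix.IsHermitian, conjTranspose_eq_transpose_of_trivial] at this
  refine Matrix.PosDef.of_dotProduct_mulVec_pos ?_ ?_
  · rw [Matrix.IsHermitian, conjTranspose_eq_transpose_of_trivial, Matrix.transpose_mul,
      Matrix.transpose_mul, transpose_transpose, hAt, Matrix.mul_assoc]
  · intro x hx
    have hBx : B *ᵥ x ≠ 0 := by
      intro h
      apply hx
      have hinj := Matrix.mulVec_injective_iff_isUnit.mpr hB
      have : B *ᵥ x = B *ᵥ 0 := by simpa using h
      exact hinj this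
    have hx' : star x = x := by
      funext i; simp
    have key : star x ⬝ᵥ (Bᵀ * A * B) *ᵥ x = (B *ᵥ x) ⬝ᵥ (A *ᵥ (B *ᵥ x)) := by
      rw [hx', ← Matrix.mulVec_mulVec, ← Matrix.mulVec_mulVec, Matrix.dotProduct_mulVec,
        Matrix.vecMul_transpose]
    rw [key]
    have := hA.dotProduct_mulVec_pos hBx
    have h2 : star (B *ᵥ x) = B *ᵥ x := by funext i; simp
    rwa [h2] at this

lemma second_deriv_nonpos {p : ℕ} (α lam : Fin p → ℝ) (hα : ∀ i, 0 < α i)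
    (s : Set ℝ) (hs : IsOpen s)
    (hpos : ∀ t ∈ s, ∀ i, 0 < 1 + t * lam i)
    (g : ℝ → ℝ) (hg : ∀ t ∈ s, g t = (∑ i, α i / (1 + t * lam i))⁻¹) :
    ∀ t ∈ s, deriv (deriv g) t ≤ 0 := by
  intro t ht
  rcases Nat.eq_zero_or_pos p with hp | hp
  · -- g is locally constant 0
    subst hp
    have hgz : ∀ u ∈ s, g u = 0 := by
      intro u hu; rw [hg u hu]; simp
    have h1 : ∀ u ∈ s, deriv g u = deriv (fun _ : ℝ => (0:ℝ)) u := by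
      intro u hu
      exact Filter.EventuallyEq.deriv_eq <|
        Filter.eventuallyEq_of_mem (hs.mem_nhds hu) (fun v hv => hgz v hv)
    have h2 : deriv (deriv g) t = deriv (fun _ : ℝ => (0:ℝ)) t := by
      refine Filter.EventuallyEq.deriv_eq ?_
      filter_upwards [hs.mem_nhds ht] with v hv
      rw [h1 v hv, deriv_const]
    simp [h2]
  · haveI : Nonempty (Fin p) := Fin.pos_iff_nonempty.mp hp
    set F : ℝ → ℝ := fun u => ∑ i, α i * (1 + u * lam i)⁻¹ with hF
    set F1 : ℝ → ℝ := fun u => ∑ i, α i * lam i * ((1 + u * lam i)⁻¹) ^ 2 with hF1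
    set F2 : ℝ → ℝ := fun u => ∑ i, α i * lam i ^ 2 * ((1 + u * lam i)⁻¹) ^ 3 with hF2
    have hgF : ∀ u ∈ s, g u = (F u)⁻¹ := by
      intro u hu; rw [hg u hu, hF]
      simp only [div_eq_mul_inv]
    have hFpos : ∀ u ∈ s, 0 < F u := by
      intro u hu
      exact Finset.sum_pos (fun i _ => mul_pos (hα i) (inv_pos.2 (hpos u hu i)))
        Finset.univ_nonempty
    -- derivatives of F and F1 at points of s
    have hdF : ∀ u ∈ s, HasDerivAt F (-(F1 u)) u := by
      intro u hu
      have : HasDerivAt F (∑ i, -(α i * lam i * ((1 + u * lam i)⁻¹) ^ 2)) u := by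
        apply HasDerivAt.fun_sum
        intro i _
        have hlin : HasDerivAt (fun v : ℝ => 1 + v * lam i) (lam i) u := by
          simpa using ((hasDerivAt_id u).mul_const (lam i)).const_add 1
        have := (hlin.inv (hpos u hu i).ne').const_mul (α i)
        refine this.congr_deriv ?_
        field_simp
      convert this using 1
      rw [hF1]
      exact (Finset.sum_neg_distrib _).symm
    have hdF1 : ∀ u ∈ s, HasDerivAt F1 (-(2 * F2 u)) u := by
      intro u hu
      have : HasDerivAt F1 (∑ i, -(2 * (α i * lam i ^ 2 * ((1 + u * lam i)⁻¹) ^ 3))) u := by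
        apply HasDerivAt.fun_sum
        intro i _
        have hlin : HasDerivAt (fun v : ℝ => 1 + v * lam i) (lam i) u := by
          simpa using ((hasDerivAt_id u).mul_const (lam i)).const_add 1
        have hinv := hlin.inv (hpos u hu i).ne'
        have := ((hinv.pow 2)).const_mul (α i * lam i)
        refine this.congr_deriv ?_
        have h := (hpos u hu i).ne'
        simp only [Pi.inv_apply, div_eq_mul_inv, ← inv_pow]
        push_cast
        ring
      convert this using 1
      rw [hF2, Finset.mul_sum, ← Finset.sum_neg_distrib]
    -- deriv g = F1/F^2 on s
    have hderivg : ∀ u ∈ s, deriv g u = F1 u / (F u) ^ 2 := by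
      intro u hu
      have h1 : deriv g u = deriv (fun v => (F v)⁻¹) u :=
        Filter.EventuallyEq.deriv_eq <|
          Filter.eventuallyEq_of_mem (hs.mem_nhds hu) (fun v hv => hgF v hv)
      have h2 : HasDerivAt (fun v => (F v)⁻¹) (F1 u / (F u) ^ 2) u := by
        have := (hdF u hu).inv (hFpos u hu).ne'
        refine this.congr_deriv ?_
        ring
      rw [h1, h2.deriv]
    have hsecond : deriv (deriv g) t = deriv (fun v => F1 v / (F v) ^ 2) t := by
      refine Filter.EventuallyEq.deriv_eq ?_
      filter_upwards [hs.mem_nhds ht] with v hv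
      have h2 : HasDerivAt (fun w => F1 w / (F w) ^ 2) (((-(2 * F2 v)) * (F v) ^ 2 -
          F1 v * (2 * F v ^ 1 * (-(F1 v)))) / ((F v) ^ 2) ^ 2) v :=
        (hdF1 v hv).div ((hdF v hv).pow 2) (pow_ne_zero 2 (hFpos v hv).ne')
      rw [hderivg v hv]
    rw [hsecond]
    have h2 : HasDerivAt (fun w => F1 w / (F w) ^ 2) (((-(2 * F2 t)) * (F t) ^ 2 -
        F1 t * (2 * F t ^ 1 * (-(F1 t)))) / ((F t) ^ 2) ^ 2) t :=
      (hdF1 t ht).div ((hdF t ht).pow 2) (pow_ne_zero 2 (hFpos t ht).ne')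
    rw [h2.deriv]
    -- Cauchy–Schwarz: F1 t ^ 2 ≤ F2 t * F t
    have hcs : (F1 t) ^ 2 ≤ F2 t * F t := by
      have key := Finset.sum_mul_sq_le_sq_mul_sq Finset.univ
        (fun i => Real.sqrt (α i) * lam i * (1 + t * lam i)⁻¹ * Real.sqrt ((1 + t * lam i)⁻¹))
        (fun i => Real.sqrt (α i) * Real.sqrt ((1 + t * lam i)⁻¹))
      have e1 : ∀ i : Fin p,
          (Real.sqrt (α i) * lam i * (1 + t * lam i)⁻¹ * Real.sqrt ((1 + t * lam i)⁻¹)) *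
            (Real.sqrt (α i) * Real.sqrt ((1 + t * lam i)⁻¹)) =
          α i * lam i * ((1 + t * lam i)⁻¹) ^ 2 := by
        intro i
        have hu : (0:ℝ) ≤ (1 + t * lam i)⁻¹ := (inv_pos.2 (hpos t ht i)).le
        have h1 : Real.sqrt (α i) * Real.sqrt (α i) = α i := Real.mul_self_sqrt (hα i).le
        have h2 : Real.sqrt ((1 + t * lam i)⁻¹) * Real.sqrt ((1 + t * lam i)⁻¹)
            = (1 + t * lam i)⁻¹ := Real.mul_self_sqrt hu
        linear_combination (lam i * (1 + t * lam i)⁻¹ * (Real.sqrt ((1 + t * lam i)⁻¹) *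
          Real.sqrt ((1 + t * lam i)⁻¹))) * h1 + (lam i * (1 + t * lam i)⁻¹ * α i) * h2
      have e2 : ∀ i : Fin p,
          (Real.sqrt (α i) * lam i * (1 + t * lam i)⁻¹ * Real.sqrt ((1 + t * lam i)⁻¹)) ^ 2 =
          α i * lam i ^ 2 * ((1 + t * lam i)⁻¹) ^ 3 := by
        intro i
        have hu : (0:ℝ) ≤ (1 + t * lam i)⁻¹ := (inv_pos.2 (hpos t ht i)).le
        have h1 : Real.sqrt (α i) ^ 2 = α i := Real.sq_sqrt (hα i).le
        have h2 : Real.sqrt ((1 + t * lam i)⁻¹) ^ 2 = (1 + t * lam i)⁻¹ := Real.sq_sqrt hu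
        linear_combination (lam i ^ 2 * ((1 + t * lam i)⁻¹) ^ 2 *
          Real.sqrt ((1 + t * lam i)⁻¹) ^ 2) * h1 +
          (lam i ^ 2 * ((1 + t * lam i)⁻¹) ^ 2 * α i) * h2
      have e3 : ∀ i : Fin p,
          (Real.sqrt (α i) * Real.sqrt ((1 + t * lam i)⁻¹)) ^ 2 =
          α i * (1 + t * lam i)⁻¹ := by
        intro i
        have hu : (0:ℝ) ≤ (1 + t * lam i)⁻¹ := (inv_pos.2 (hpos t ht i)).le
        have h1 : Real.sqrt (α i) ^ 2 = α i := Real.sq_sqrt (hα i).le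
        have h2 : Real.sqrt ((1 + t * lam i)⁻¹) ^ 2 = (1 + t * lam i)⁻¹ := Real.sq_sqrt hu
        linear_combination (Real.sqrt ((1 + t * lam i)⁻¹) ^ 2) * h1 + α i * h2
      calc (F1 t) ^ 2 = (∑ i, (Real.sqrt (α i) * lam i * (1 + t * lam i)⁻¹ *
              Real.sqrt ((1 + t * lam i)⁻¹)) *
              (Real.sqrt (α i) * Real.sqrt ((1 + t * lam i)⁻¹))) ^ 2 := by
            rw [hF1]; congr 1; exact Finset.sum_congr rfl (fun i _ => (e1 i).symm)
        _ ≤ _ := key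
        _ = F2 t * F t := by
            rw [hF2, hF]
            congr 1
            · exact Finset.sum_congr rfl (fun i _ => e2 i)
            · exact Finset.sum_congr rfl (fun i _ => e3 i)
    have hFt := hFpos t ht
    apply div_nonpos_of_nonpos_of_nonneg
    · nlinarith [hcs, hFt]
    · positivity

/-- One-dimensional restriction used to prove concavity of `X ↦ 1/tr(X⁻¹)`:
with `X^{-1/2} V X^{-1/2} = Q Λ Qᵀ` and `αᵢ = (Qᵀ X⁻¹ Q)ᵢᵢ`, the function
`g(t) = 1/tr[(X+tV)⁻¹]` equals `(∑ αᵢ/(1+tλᵢ))⁻¹` and is concave (`g'' ≤ 0`)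
on an open interval around `0` where `X + tV` is positive definite. -/
theorem one_dim_restriction_concave (p : ℕ)
    (X V R Q : Matrix (Fin p) (Fin p) ℝ) (lam : Fin p → ℝ)
    (hX : X.PosDef) (hV : V.IsSymm)
    (hR : R.PosDef) (hRX : R * R = X)
    (hQ : Q * Qᵀ = 1) (hQ' : Qᵀ * Q = 1)
    (hdecomp : R⁻¹ * V * R⁻¹ = Q * Matrix.diagonal lam * Qᵀ)
    (α : Fin p → ℝ) (hα : ∀ i, α i = (Qᵀ * X⁻¹ * Q) i i)
    (a b : ℝ) (ha : a < 0) (hb : 0 < b)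
    (hI : ∀ t ∈ Set.Ioo a b, (X + t • V).PosDef)
    (g : ℝ → ℝ) (hg : ∀ t, g t = (((X + t • V)⁻¹).trace)⁻¹) :
    (∀ i, 0 < α i) ∧
    (∀ t ∈ Set.Ioo a b, g t = (∑ i, α i / (1 + t * lam i))⁻¹) ∧
    (∀ t ∈ Set.Ioo a b, deriv (deriv g) t ≤ 0) := by
  have hRdet : IsUnit R.det := (Matrix.isUnit_iff_isUnit_det R).mp hR.isUnit
  have hRR : R⁻¹ * R = 1 := Matrix.nonsing_inv_mul R hRdet
  have hRR' : R * R⁻¹ = 1 := Matrix.mul_nonsing_inv R hRdet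
  have hQinv : Q⁻¹ = Qᵀ := Matrix.inv_eq_right_inv hQ
  have hQtinv : Qᵀ⁻¹ = Q := Matrix.inv_eq_right_inv hQ'
  have hQu : IsUnit Q := ⟨⟨Q, Qᵀ, hQ, hQ'⟩, rfl⟩
  have hRinvu : IsUnit R⁻¹ := ⟨⟨R⁻¹, R, hRR, hRR'⟩, rfl⟩
  have hXinv : X⁻¹ = R⁻¹ * R⁻¹ := by rw [← hRX, Matrix.mul_inv_rev]
  have hRsymm : Rᵀ = R := by
    have := hR.1; rwa [Matrix.IsHermitian, conjTranspose_eq_transpose_of_trivial] at this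
  have hRinvsymm : (R⁻¹)ᵀ = R⁻¹ := by rw [Matrix.transpose_nonsing_inv, hRsymm]
  set D : ℝ → Matrix (Fin p) (Fin p) ℝ := fun t => Matrix.diagonal (fun i => 1 + t * lam i)
    with hD
  have hDval : ∀ t, D t = 1 + t • Matrix.diagonal lam := by
    intro t
    have h1 : (fun i => 1 + t * lam i) = (1 : Fin p → ℝ) + t • lam := by
      funext i; simp
    rw [hD]
    ext i j
    by_cases h : i = j <;>
      simp [h, Matrix.diagonal_apply, Matrix.one_apply, Matrix.add_apply]
  have key : ∀ t : ℝ, X + t • V = R * (Q * D t * Qᵀ) * R := by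
    intro t
    have h1 : Q * D t * Qᵀ = 1 + t • (R⁻¹ * V * R⁻¹) := by
      rw [hDval, hdecomp, Matrix.mul_add, Matrix.add_mul, Matrix.mul_one,  hQ,
        Matrix.mul_smul, Matrix.smul_mul]
    rw [h1, Matrix.mul_add, Matrix.add_mul, Matrix.mul_one, hRX, Matrix.mul_smul,
      Matrix.smul_mul]
    congr 1
    congr 1
    symm
    calc R * (R⁻¹ * V * R⁻¹) * R = R * R⁻¹ * V * (R⁻¹ * R) := by
          simp only [Matrix.mul_assoc]
      _ = V := by rw [hRR', hRR, Matrix.one_mul, Matrix.mul_one]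
  -- positivity of diagonal entries
  have hDpos : ∀ t ∈ Set.Ioo a b, ∀ i, 0 < 1 + t * lam i := by
    intro t ht
    have h1 := posDef_transpose_mul_mul (hI t ht) R⁻¹ hRinvu
    rw [hRinvsymm] at h1
    have h2 := posDef_transpose_mul_mul h1 Q hQu
    have h3 : Qᵀ * (R⁻¹ * (X + t • V) * R⁻¹) * Q = D t := by
      rw [key t]
      have h4 : R⁻¹ * (R * (Q * D t * Qᵀ) * R) * R⁻¹ = Q * D t * Qᵀ := by
        calc R⁻¹ * (R * (Q * D t * Qᵀ) * R) * R⁻¹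
            = (R⁻¹ * R) * (Q * D t * Qᵀ) * (R * R⁻¹) := by simp only [Matrix.mul_assoc]
          _ = Q * D t * Qᵀ := by rw [hRR, hRR', Matrix.one_mul, Matrix.mul_one]
      rw [h4]
      calc Qᵀ * (Q * D t * Qᵀ) * Q = (Qᵀ * Q) * D t * (Qᵀ * Q) := by
            simp only [Matrix.mul_assoc]
        _ = D t := by rw [hQ', Matrix.one_mul, Matrix.mul_one]
    rw [h3] at h2
    exact Matrix.posDef_diagonal_iff.mp h2
  -- part 1
  have hQXQ : (Qᵀ * X⁻¹ * Q).PosDef := posDef_transpose_mul_mul hX.inv Q hQu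
  have part1 : ∀ i, 0 < α i := by
    intro i
    rw [hα i]
    have h := hQXQ.dotProduct_mulVec_pos (x := Pi.single i 1) (by
      intro hcon
      have := congrFun hcon i
      simp at this)
    have hx' : star (Pi.single i 1 : Fin p → ℝ) = Pi.single i 1 := by
      funext j; simp [Pi.single_apply]
    rw [hx', Matrix.mulVec_single] at h
    simpa [single_dotProduct] using h
  -- part 2
  have part2 : ∀ t ∈ Set.Ioo a b, g t = (∑ i, α i / (1 + t * lam i))⁻¹ := by
    intro t ht
    have hDinv : (D t)⁻¹ = Matrix.diagonal (fun i => (1 + t * lam i)⁻¹) := by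
      apply Matrix.inv_eq_right_inv
      rw [hD]
      rw [Matrix.diagonal_mul_diagonal]
      have hone : (fun i => (1 + t * lam i) * (1 + t * lam i)⁻¹) = fun _ : Fin p => (1:ℝ) := by
        funext i; exact mul_inv_cancel₀ (hDpos t ht i).ne'
      rw [hone, Matrix.diagonal_one]
    have hQDQ : (Q * D t * Qᵀ)⁻¹ = Q * (D t)⁻¹ * Qᵀ := by
      rw [Matrix.mul_inv_rev, Matrix.mul_inv_rev, hQtinv, hQinv, ← Matrix.mul_assoc]
    have hEinv : (X + t • V)⁻¹ = R⁻¹ * (Q * (D t)⁻¹ * Qᵀ) * R⁻¹ := by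
      rw [key t, Matrix.mul_inv_rev, Matrix.mul_inv_rev, hQDQ, ← Matrix.mul_assoc]
    have htrace : ((X + t • V)⁻¹).trace = ∑ i, α i / (1 + t * lam i) := by
      rw [hEinv]
      have e1 : R⁻¹ * (Q * (D t)⁻¹ * Qᵀ) * R⁻¹
          = (R⁻¹ * Q * (D t)⁻¹) * (Qᵀ * R⁻¹) := by simp only [Matrix.mul_assoc]
      rw [e1, Matrix.trace_mul_comm]
      have e2 : Qᵀ * R⁻¹ * (R⁻¹ * Q * (D t)⁻¹) = (Qᵀ * X⁻¹ * Q) * (D t)⁻¹ := by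
        rw [hXinv]; simp only [Matrix.mul_assoc]
      rw [e2, hDinv]
      rw [Matrix.trace]
      simp only [Matrix.diag_apply, Matrix.mul_diagonal]
      refine Finset.sum_congr rfl fun i _ => ?_
      rw [← hα i, div_eq_mul_inv]
    rw [hg t, htrace]
  exact ⟨part1, part2,
    second_deriv_nonpos α lam part1 (Set.Ioo a b) isOpen_Ioo hDpos g part2⟩
end

section
/- Let Σ be symmetric positive semidefinite and ρ > 0. The block matrix M = [[(Σ+ρI)^{-3}Σ, (Σ+ρI)^{-2}Σ],[(Σ+ρI)^{-2}Σ, (Σ+ρI)^{-1}Σ]] is positive semidefinite. -/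
open Matrix

lemma smul_one_posDef (p : ℕ) (ρ : ℝ) (hρ : 0 < ρ) :
    (ρ • (1 : Matrix (Fin p) (Fin p) ℝ)).PosDef := by
  rw [Matrix.smul_one_eq_diagonal]
  exact Matrix.posDef_diagonal_iff.mpr fun _ => hρ

/-- The block matrix `[[(Σ+ρI)⁻³Σ, (Σ+ρI)⁻²Σ],[(Σ+ρI)⁻²Σ, (Σ+ρI)⁻¹Σ]]` is
positive semidefinite for positive semidefinite `Σ` and `ρ > 0`. -/
theorem block_matrix_psd (p : ℕ) (S : Matrix (Fin p) (Fin p) ℝ)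
    (hS : S.PosSemidef) (ρ : ℝ) (hρ : 0 < ρ) :
    (Matrix.fromBlocks
      ((S + ρ • 1)⁻¹ ^ 3 * S) ((S + ρ • 1)⁻¹ ^ 2 * S)
      ((S + ρ • 1)⁻¹ ^ 2 * S) ((S + ρ • 1)⁻¹ * S)).PosSemidef := by
  set A := (S + ρ • 1)⁻¹ with hA
  have hSum : (S + ρ • 1).PosDef := Matrix.PosDef.posSemidef_add hS (smul_one_posDef p ρ hρ)
  have hApd : A.PosDef := hSum.inv
  open scoped MatrixOrder in set Q := CFC.sqrt S with hQ
  have hQpsd : Q.PosSemidef := by open scoped MatrixOrder in exact (CFC.sqrt_nonneg S).posSemidef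
  have hQQ : Q * Q = S := by open scoped MatrixOrder in exact CFC.sqrt_mul_sqrt_self S hS.nonneg
  have hcommQS : Commute Q S := by
    unfold Commute SemiconjBy
    rw [← hQQ, mul_assoc]
  have hcommQsum : Commute Q (S + ρ • 1) :=
    hcommQS.add_right ((Commute.one_right Q).smul_right ρ)
  have hcommSsum : Commute S (S + ρ • 1) :=
    (Commute.refl S).add_right ((Commute.one_right S).smul_right ρ)
  letI := hSum.isUnit.invertible
  have hAinvOf : A = ⅟(S + ρ • 1) := (invOf_eq_nonsing_inv _).symm
  have hcommQA : Commute Q A := hAinvOf ▸ hcommQsum.invOf_right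
  have hcommSA : Commute S A := hAinvOf ▸ hcommSsum.invOf_right
  -- X = A * S is PSD
  have hXeq : Q * A * Qᴴ = A * S := by
    rw [hQpsd.isHermitian.eq, mul_assoc, ← hcommQA.eq, ← mul_assoc, hQQ]
    exact hcommSA.eq
  have hX : (A * S).PosSemidef := hXeq ▸ hApd.posSemidef.mul_mul_conjTranspose_same Q
  -- conjugate by L = fromRows A 1
  have key := hX.mul_mul_conjTranspose_same (Matrix.fromRows A (1 : Matrix (Fin p) (Fin p) ℝ))
  have hLeq : Matrix.fromRows A (1 : Matrix (Fin p) (Fin p) ℝ) * (A * S) *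
      (Matrix.fromRows A (1 : Matrix (Fin p) (Fin p) ℝ))ᴴ =
      Matrix.fromBlocks (A ^ 3 * S) (A ^ 2 * S) (A ^ 2 * S) (A * S) := by
    rw [Matrix.conjTranspose_fromRows_eq_fromCols_conjTranspose, Matrix.fromRows_mul,
      Matrix.fromRows_mul_fromCols, hApd.isHermitian.eq, conjTranspose_one]
    rw [Matrix.fromBlocks_inj]
    refine ⟨?_, ?_, ?_, ?_⟩ <;> simp [pow_succ, pow_two, mul_assoc, hcommSA.eq]
  rw [hLeq] at key
  exact key
end

section
/- Fix γ ∈ (0,1) and define OE(k) = 1/(1 + (k-1)γ²/(1 - kγ)) for real k ∈ [1, 1/γ). Then OE is decreasing in k, OE(1) = 1, and the largest k with OE(k) ≥ 1/2 equals (γ² + 1)/(γ² + γ). -/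
/-- For `γ ∈ (0,1)` and `OE(k) = 1/(1+(k-1)γ²/(1-kγ))` on `[1, 1/γ)`: `OE` is
decreasing, `OE(1)=1`, and the largest `k` with `OE(k) ≥ 1/2` is
`(γ²+1)/(γ²+γ)`. -/
theorem OE_properties (γ : ℝ) (hγ0 : 0 < γ) (hγ1 : γ < 1)
    (OE : ℝ → ℝ) (hOE : ∀ k, OE k = 1 / (1 + (k - 1) * γ ^ 2 / (1 - k * γ))) :
    AntitoneOn OE (Set.Ico 1 (1/γ)) ∧
    OE 1 = 1 ∧
    IsGreatest {k | k ∈ Set.Ico 1 (1/γ) ∧ 1/2 ≤ OE k}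
      ((γ ^ 2 + 1) / (γ ^ 2 + γ)) := by
  have h1γ : (0:ℝ) < 1 - γ := by linarith
  have hpos : ∀ k ∈ Set.Ico (1:ℝ) (1/γ), 0 < 1 - k*γ ∧ 0 < 1 + γ - k*γ := by
    rintro k ⟨hk1, hk2⟩
    have : k * γ < 1 := (lt_div_iff₀ hγ0).mp hk2
    constructor <;> linarith
  have hform : ∀ k ∈ Set.Ico (1:ℝ) (1/γ),
      OE k = (1 - k*γ) / ((1-γ) * (1+γ-k*γ)) := by
    intro k hk
    obtain ⟨h1, h2⟩ := hpos k hk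
    have heq : 1 + (k - 1) * γ ^ 2 / (1 - k * γ)
        = ((1-γ) * (1+γ-k*γ)) / (1 - k*γ) := by
      field_simp
      ring
    rw [hOE, heq, one_div, inv_div]
  refine ⟨?_, ?_, ?_⟩
  · intro a ha b hb hab
    obtain ⟨ha1, ha2⟩ := hpos a ha
    obtain ⟨hb1, hb2⟩ := hpos b hb
    rw [hform a ha, hform b hb]
    rw [div_le_div_iff₀ (by positivity) (by positivity)]
    nlinarith [mul_le_mul_of_nonneg_left hab (sq_nonneg γ)]
  · rw [hOE]
    norm_num
  · have hk1 : (1:ℝ) ≤ (γ ^ 2 + 1) / (γ ^ 2 + γ) := by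
      rw [le_div_iff₀ (by positivity)]
      nlinarith
    have hk2 : (γ ^ 2 + 1) / (γ ^ 2 + γ) < 1/γ := by
      rw [div_lt_div_iff₀ (by positivity) hγ0]
      nlinarith [mul_pos (pow_pos hγ0 2) h1γ]
    have hmem : (γ ^ 2 + 1) / (γ ^ 2 + γ) ∈ Set.Ico (1:ℝ) (1/γ) := ⟨hk1, hk2⟩
    constructor
    · refine ⟨hmem, ?_⟩
      obtain ⟨h1, h2⟩ := hpos _ hmem
      rw [hform _ hmem, div_le_div_iff₀ (by norm_num) (by positivity)]
      have hk : (γ ^ 2 + 1) / (γ ^ 2 + γ) * (γ ^ 2 + γ) = γ ^ 2 + 1 := by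
        field_simp
      nlinarith
    · rintro k ⟨hk, hhalf⟩
      obtain ⟨h1, h2⟩ := hpos k hk
      rw [hform k hk, div_le_div_iff₀ (by norm_num) (by positivity)] at hhalf
      rw [le_div_iff₀ (by positivity)]
      nlinarith
end
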